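/- The row vector m = (1, 2, ..., M) is a left null vector of the matrix B, i.e., m B = 0. Consequently, if B V = λ V with λ ≠ 0, then Σ_{ℓ=1}^M ℓ V_ℓ = 0. -/

import Mathlib

/-- The action of the linearization matrix `B` on a vector, indexed by `1, …, M = N+1`. -/
noncomputable def applyB (K : ℝ) (N : ℕ) (V : ℕ → ℂ) (ℓ : ℕ) : ℂ :=
  if ℓ = 1 then
    -((K : ℂ) + 1) * ((N : ℂ) + 3) * V 1 + V 2 - (K : ℂ) * ∑ j ∈ Finset.Icc 2 N, V j
      + (((N : ℂ) + 1) * (K : ℂ) + 1) * V (N + 1)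
  else if ℓ = N + 1 then
    ((K : ℂ) + 1) * (V 1 + V N - V (N + 1))
  else if 2 ≤ ℓ ∧ ℓ ≤ N then
    (K : ℂ) * (V (ℓ - 1) - V ℓ) + (V (ℓ - 1) - 2 * V ℓ + V (ℓ + 1))
  else 0

private lemma tel (h : ℕ → ℂ) (N : ℕ) (hN : 1 ≤ N) :
    ∑ ℓ ∈ Finset.Icc 2 N, (h (ℓ + 1) - h ℓ) = h (N + 1) - h 2 := by
  induction N, hN using Nat.le_induction with
  | base => simp [Finset.Icc_eq_empty (by omega : ¬ (2:ℕ) ≤ 1)]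
  | succ n hn ih =>
      rw [Finset.sum_Icc_succ_top (by omega), ih]
      ring

/-- The row vector `(1, 2, …, M)` is a left null vector of `B`; consequently any
eigenvector for a nonzero eigenvalue has vanishing total mass. -/
theorem left_null_vector (N : ℕ) (hN : 2 ≤ N) (K : ℝ) (hK : 0 < K) :
    (∀ V : ℕ → ℂ, ∑ ℓ ∈ Finset.Icc 1 (N + 1), (ℓ : ℂ) * applyB K N V ℓ = 0) ∧
    (∀ (V : ℕ → ℂ) (lam : ℂ), lam ≠ 0 →
      (∀ ℓ ∈ Finset.Icc 1 (N + 1), applyB K N V ℓ = lam * V ℓ) →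
      ∑ ℓ ∈ Finset.Icc 1 (N + 1), (ℓ : ℂ) * V ℓ = 0) := by
  have main : ∀ V : ℕ → ℂ, ∑ ℓ ∈ Finset.Icc 1 (N + 1), (ℓ : ℂ) * applyB K N V ℓ = 0 := by
    intro V
    set a : ℕ → ℂ := fun ℓ => (ℓ : ℂ) * V (ℓ - 1) with ha
    set b : ℕ → ℂ := fun ℓ => ((ℓ : ℂ) - 1) * V ℓ with hb
    have hmid : ∑ ℓ ∈ Finset.Icc 2 N, (ℓ : ℂ) * applyB K N V ℓ
        = ((K : ℂ) + 1) * (a 2 - a (N + 1)) + (b (N + 1) - b 2)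
          + (K : ℂ) * ∑ ℓ ∈ Finset.Icc 2 N, V ℓ := by
      have step : ∀ ℓ ∈ Finset.Icc 2 N, (ℓ : ℂ) * applyB K N V ℓ
          = (((K : ℂ) + 1) * ((fun ℓ => -(a ℓ)) (ℓ + 1) - (fun ℓ => -(a ℓ)) ℓ)
            + (b (ℓ + 1) - b ℓ)) + (K : ℂ) * V ℓ := by
        intro ℓ hℓ
        simp only [Finset.mem_Icc] at hℓ
        rw [applyB, if_neg (by omega), if_neg (by omega), if_pos ⟨hℓ.1, hℓ.2⟩]
        simp only [ha, hb]
        have h1 : ℓ + 1 - 1 = ℓ := by omega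
        rw [h1]
        push_cast
        ring
      rw [Finset.sum_congr rfl step, Finset.sum_add_distrib, Finset.sum_add_distrib,
        ← Finset.mul_sum, ← Finset.mul_sum, tel b N (by omega), tel (fun ℓ => -(a ℓ)) N (by omega)]

      ring
    have hsplit : Finset.Icc 1 (N + 1) = insert 1 (Finset.Icc 2 (N + 1)) := by
      ext x; simp [Finset.mem_Icc]; omega
    rw [hsplit, Finset.sum_insert (by simp), Finset.sum_Icc_succ_top (by omega), hmid]
    have hA1 : applyB K N V 1
        = -((K : ℂ) + 1) * ((N : ℂ) + 3) * V 1 + V 2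
          - (K : ℂ) * ∑ j ∈ Finset.Icc 2 N, V j
          + (((N : ℂ) + 1) * (K : ℂ) + 1) * V (N + 1) := by
      rw [applyB, if_pos rfl]
    have hAM : applyB K N V (N + 1) = ((K : ℂ) + 1) * (V 1 + V N - V (N + 1)) := by
      rw [applyB, if_neg (by omega), if_pos rfl]
    rw [hA1, hAM]
    simp only [ha, hb]
    have h2 : (2 : ℕ) - 1 = 1 := rfl
    have h3 : N + 1 - 1 = N := by omega
    rw [h2, h3]
    push_cast
    ring
  refine ⟨main, ?_⟩
  intro V lam hlam heig
  have h0 := main V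
  rw [Finset.sum_congr rfl (fun ℓ hℓ => by rw [heig ℓ hℓ])] at h0
  have : lam * ∑ ℓ ∈ Finset.Icc 1 (N + 1), (ℓ : ℂ) * V ℓ = 0 := by
    rw [Finset.mul_sum]
    rw [← h0]
    exact Finset.sum_congr rfl fun ℓ _ => by ring
  rcases mul_eq_zero.mp this with h | h
  · exact absurd h hlam
  · exact h
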